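/- Let n ≥ 3 be an integer and a₀, R₀ > 0, and set t* = a₀ R₀³/(n(4n−10)). Define, for t ∈ [0, t*), a(t) = a₀ (1 − n(4n−10) t/(a₀R₀³))^{(n+2)/(4n−10)} and R(t) = R₀ (1 − n(4n−10) t/(a₀R₀³))^{(n−4)/(4n−10)}. Then a(0) = a₀, R(0) = R₀, and for all t ∈ [0, t*): a′(t) = −n(n+2)/R(t)³ and R′(t) = −n(n−4)/(R(t)² a(t)). Moreover a is strictly decreasing with a(t) → 0 as t → t*⁻, and: if n = 3 then R is strictly increasing with R(t) → +∞ as t → t*⁻; if n = 4 then R(t) = R₀ for all t; if n ≥ 5 then R is strictly decreasing with R(t) → 0 as t → t*⁻. -/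

import Mathlib

open Real Filter Set

/-- Explicit solution of the fourth-order total variation flow emanating from
`a₀ 1_{B_{R₀}}` in dimension `n ≥ 3`: formulas, ODEs, monotonicity and behavior at the
extinction time `t* = a₀R₀³/(n(4n−10))`. Here `x ^ y` with real exponent is `Real.rpow`. -/
theorem stmt_13 (n : ℕ) (hn : 3 ≤ n) (a0 R0 : ℝ) (ha0 : 0 < a0) (hR0 : 0 < R0)
    (tstar : ℝ) (htstar : tstar = a0 * R0 ^ 3 / ((n : ℝ) * (4 * (n : ℝ) - 10)))
    (a R : ℝ → ℝ)
    (ha : a = fun t => a0 * (1 - (n : ℝ) * (4 * (n : ℝ) - 10) * t / (a0 * R0 ^ 3))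
      ^ (((n : ℝ) + 2) / (4 * (n : ℝ) - 10)))
    (hR : R = fun t => R0 * (1 - (n : ℝ) * (4 * (n : ℝ) - 10) * t / (a0 * R0 ^ 3))
      ^ (((n : ℝ) - 4) / (4 * (n : ℝ) - 10))) :
    a 0 = a0 ∧ R 0 = R0 ∧
    (∀ t ∈ Set.Ico (0 : ℝ) tstar,
      HasDerivAt a (-((n : ℝ) * ((n : ℝ) + 2)) / R t ^ 3) t ∧
      HasDerivAt R (-((n : ℝ) * ((n : ℝ) - 4)) / (R t ^ 2 * a t)) t) ∧
    StrictAntiOn a (Set.Ico 0 tstar) ∧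
    Filter.Tendsto a (nhdsWithin tstar (Set.Iio tstar)) (nhds 0) ∧
    (n = 3 → StrictMonoOn R (Set.Ico 0 tstar) ∧
      Filter.Tendsto R (nhdsWithin tstar (Set.Iio tstar)) Filter.atTop) ∧
    (n = 4 → ∀ t ∈ Set.Ico (0 : ℝ) tstar, R t = R0) ∧
    (5 ≤ n → StrictAntiOn R (Set.Ico 0 tstar) ∧
      Filter.Tendsto R (nhdsWithin tstar (Set.Iio tstar)) (nhds 0)) := by
  have hn3 : (3 : ℝ) ≤ (n : ℝ) := by exact_mod_cast hn
  set d : ℝ := 4 * (n : ℝ) - 10 with hd_def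
  set c : ℝ := (n : ℝ) * d with hc_def
  set K : ℝ := a0 * R0 ^ 3 with hK_def
  set p : ℝ := ((n : ℝ) + 2) / d with hp_def
  set q : ℝ := ((n : ℝ) - 4) / d with hq_def
  clear_value d c K p q
  have hd : (0 : ℝ) < d := by rw [hd_def]; linarith
  have hc : (0 : ℝ) < c := by rw [hc_def]; positivity
  have hK : (0 : ℝ) < K := by rw [hK_def]; positivity
  have hp : (0 : ℝ) < p := by rw [hp_def]; positivity
  have ha0' : a0 ≠ 0 := ha0.ne'
  have hR0' : R0 ≠ 0 := hR0.ne'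
  have hd' : d ≠ 0 := hd.ne'
  have hd0 : (4 * (n : ℝ) - 10) ≠ 0 := by rw [← hd_def]; exact hd'
  -- positivity of the inner factor
  have hfpos : ∀ t < tstar, 0 < 1 - c * t / K := by
    intro t ht
    have h1 : c * t < K := by
      rw [htstar, lt_div_iff₀ hc] at ht
      linarith [ht]
    have := (div_lt_one hK).2 h1
    linarith
  -- strict antitonicity of the inner factor
  have hfanti : ∀ s t : ℝ, s < t → 1 - c * t / K < 1 - c * s / K := by
    intro s t hst
    have : c * s / K < c * t / K := by gcongr
    linarith
  -- the inner factor tends to 0 from the right as t → tstar⁻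
  have hf0 : Tendsto (fun t => 1 - c * t / K) (nhdsWithin tstar (Set.Iio tstar)) (nhds 0) := by
    have hcont : Continuous fun t : ℝ => 1 - c * t / K :=
      continuous_const.sub ((continuous_const.mul continuous_id).div_const K)
    have : Tendsto (fun t => 1 - c * t / K) (nhdsWithin tstar (Set.Iio tstar))
        (nhds (1 - c * tstar / K)) :=
      (hcont.tendsto tstar).mono_left nhdsWithin_le_nhds
    have hval : 1 - c * tstar / K = 0 := by
      rw [htstar]; field_simp; ring
    rwa [hval] at this
  have hfIoi : Tendsto (fun t => 1 - c * t / K) (nhdsWithin tstar (Set.Iio tstar))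
      (nhdsWithin 0 (Set.Ioi 0)) := by
    rw [tendsto_nhdsWithin_iff]
    refine ⟨hf0, ?_⟩
    filter_upwards [self_mem_nhdsWithin] with t ht
    exact hfpos t ht
  -- a(0) = a0
  have ha_zero : a 0 = a0 := by
    rw [ha]; simp [Real.one_rpow]
  have hR_zero : R 0 = R0 := by
    rw [hR]; simp [Real.one_rpow]
  refine ⟨ha_zero, hR_zero, ?_, ?_, ?_, ?_, ?_, ?_⟩
  · -- ODEs
    intro t ht
    have hft : 0 < 1 - c * t / K := hfpos t ht.2
    have hf' : HasDerivAt (fun t : ℝ => 1 - c * t / K) (-(c / K)) t := by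
      have := (((hasDerivAt_id t).const_mul c).div_const K).const_sub 1
      simpa using this
    have hRt3 : R t ^ 3 = R0 ^ 3 * (1 - c * t / K) ^ (q * 3) := by
      rw [hR]
      simp only
      rw [mul_pow, ← Real.rpow_natCast ((1 - c * t / K) ^ q) 3,
        ← Real.rpow_mul hft.le]
      norm_num
    have hXpos : (0 : ℝ) < (1 - c * t / K) ^ (q * 3) := Real.rpow_pos_of_pos hft _
    constructor
    · have hda : HasDerivAt a (a0 * (-(c / K) * p * (1 - c * t / K) ^ (p - 1))) t := by
        rw [ha]
        exact (hf'.rpow_const (Or.inl hft.ne')).const_mul a0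
      convert hda using 1
      have hexp : p - 1 = -(q * 3) := by
        rw [hp_def, hq_def]; field_simp; rw [hd_def]; ring
      have key : -((n : ℝ) * ((n : ℝ) + 2)) / R0 ^ 3 = a0 * -(c / K) * p := by
        rw [hp_def, hc_def, hK_def]; field_simp [hd']
      rw [hRt3, hexp, Real.rpow_neg hft.le, ← div_div, key, div_eq_mul_inv]
      ring
    · have hdR : HasDerivAt R (R0 * (-(c / K) * q * (1 - c * t / K) ^ (q - 1))) t := by
        rw [hR]
        exact (hf'.rpow_const (Or.inl hft.ne')).const_mul R0
      convert hdR using 1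
      have hRt2 : R t ^ 2 = R0 ^ 2 * (1 - c * t / K) ^ (q * 2) := by
        rw [hR]
        simp only
        rw [mul_pow, ← Real.rpow_natCast ((1 - c * t / K) ^ q) 2,
          ← Real.rpow_mul hft.le]
        norm_num
      have hat : a t = a0 * (1 - c * t / K) ^ p := by rw [ha]
      have hexp : q - 1 = -(q * 2 + p) := by
        rw [hp_def, hq_def]; field_simp; rw [hd_def]; ring
      have hsplit : (1 - c * t / K) ^ (q * 2 + p)
          = (1 - c * t / K) ^ (q * 2) * (1 - c * t / K) ^ p :=
        Real.rpow_add hft _ _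
      have hY : (0 : ℝ) < (1 - c * t / K) ^ (q * 2) := Real.rpow_pos_of_pos hft _
      have hZ : (0 : ℝ) < (1 - c * t / K) ^ p := Real.rpow_pos_of_pos hft _
      have key : -((n : ℝ) * ((n : ℝ) - 4)) / (R0 ^ 2 * a0) = R0 * -(c / K) * q := by
        rw [hq_def, hc_def, hK_def]; field_simp [hd']
      rw [hRt2, hat, hexp, Real.rpow_neg hft.le, hsplit,
        show R0 ^ 2 * (1 - c * t / K) ^ (q * 2) * (a0 * (1 - c * t / K) ^ p)
          = (R0 ^ 2 * a0) * ((1 - c * t / K) ^ (q * 2) * (1 - c * t / K) ^ p) from by ring,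
        ← div_div, key, div_eq_mul_inv]
      ring
  · -- strict antitonicity of a
    intro s hs t ht hst
    rw [ha]
    have h1 : 1 - c * t / K < 1 - c * s / K := hfanti s t hst
    have h2 : 0 < 1 - c * t / K := hfpos t ht.2
    exact mul_lt_mul_of_pos_left (Real.rpow_lt_rpow h2.le h1 hp) ha0
  · -- a tends to 0
    rw [ha]
    have hcont : ContinuousAt (fun x : ℝ => x ^ p) 0 :=
      Real.continuousAt_rpow_const 0 p (Or.inr hp.le)
    have h1 : Tendsto (fun t => (1 - c * t / K) ^ p)
        (nhdsWithin tstar (Set.Iio tstar)) (nhds ((0 : ℝ) ^ p)) :=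
      (hcont.tendsto).comp hf0
    rw [Real.zero_rpow hp.ne'] at h1
    simpa using h1.const_mul a0
  · -- n = 3
    intro h3
    subst h3
    have hq3 : q = -(1 / 2) := by rw [hq_def, hd_def]; norm_num
    constructor
    · intro s hs t ht hst
      rw [hR]
      have h1 : 1 - c * t / K < 1 - c * s / K := hfanti s t hst
      have h2 : 0 < 1 - c * t / K := hfpos t ht.2
      exact mul_lt_mul_of_pos_left
        (Real.rpow_lt_rpow_of_neg h2 h1 (by rw [hq3]; norm_num)) hR0
    · have hhalf : Tendsto (fun t => (1 - c * t / K) ^ (1 / 2 : ℝ))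
          (nhdsWithin tstar (Set.Iio tstar)) (nhdsWithin 0 (Set.Ioi 0)) := by
        rw [tendsto_nhdsWithin_iff]
        constructor
        · have hcont : ContinuousAt (fun x : ℝ => x ^ (1 / 2 : ℝ)) 0 :=
            Real.continuousAt_rpow_const 0 _ (Or.inr (by norm_num))
          have h1 := (hcont.tendsto).comp hf0
          rwa [Real.zero_rpow (by norm_num : (1 / 2 : ℝ) ≠ 0)] at h1
        · filter_upwards [self_mem_nhdsWithin] with t ht
          exact Real.rpow_pos_of_pos (hfpos t ht) _
      have hinv := hhalf.inv_tendsto_nhdsGT_zero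
      have := hinv.const_mul_atTop hR0
      refine this.congr' ?_
      filter_upwards [self_mem_nhdsWithin] with t ht
      rw [hR]
      simp only [Pi.inv_apply, Function.comp]
      rw [hq3, Real.rpow_neg (hfpos t ht).le]
  · -- n = 4
    intro h4
    subst h4
    intro t ht
    rw [hR, hq_def, hd_def]
    norm_num
  · -- n ≥ 5
    intro h5
    have h5' : (5 : ℝ) ≤ (n : ℝ) := by exact_mod_cast h5
    have hq5 : 0 < q := by rw [hq_def, hd_def]; apply div_pos <;> linarith
    constructor
    · intro s hs t ht hst
      rw [hR]
      have h1 : 1 - c * t / K < 1 - c * s / K := hfanti s t hst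
      have h2 : 0 < 1 - c * t / K := hfpos t ht.2
      exact mul_lt_mul_of_pos_left (Real.rpow_lt_rpow h2.le h1 hq5) hR0
    · rw [hR]
      have hcont : ContinuousAt (fun x : ℝ => x ^ q) 0 :=
        Real.continuousAt_rpow_const 0 q (Or.inr hq5.le)
      have h1 := (hcont.tendsto).comp hf0
      rw [Real.zero_rpow hq5.ne'] at h1
      simpa using h1.const_mul R0
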